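/- Let U be a finite-dimensional complex vector space, q_* a quadratic form on U with kernel K of dimension k. Write det(q_* + q) = Φ_0(q) + Φ_1(q) + ... + Φ_d(q) as a polynomial in the quadratic form q, where Φ_i is homogeneous of degree i (with respect to a fixed basis, d = dim U). Then Φ_i = 0 for all i < k, and there exists a nonzero constant c such that Φ_k(q) = c·det(q|_K) for all quadratic forms q. -/

import Mathlib

open Matrix Polynomial

/-- Proposition on the discriminant of quadratic forms: if `q_*` has kernel `K` of
dimension `k`, then the homogeneous components `Φ_i` of `q ↦ det(q_* + q)` vanish for
`i < k`, and `Φ_k(q) = c·det(q|_K)` for some fixed `c ≠ 0`. Quadratic forms on `ℂ^d` are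
represented by symmetric matrices, and `Φ_i(q)` is the coefficient of `t^i` in
`det(q_* + t·q)`. -/
theorem stmt_2 (d k : ℕ) (Q : Matrix (Fin d) (Fin d) ℂ) (hQ : Q.IsSymm)
    (K : Submodule ℂ (Fin d → ℂ)) (hK : K = LinearMap.ker Q.mulVecLin)
    (hk : Module.finrank ℂ K = k)
    (b : Module.Basis (Fin k) ℂ K) :
    (∀ M : Matrix (Fin d) (Fin d) ℂ, M.IsSymm → ∀ i < k,
      (Matrix.det (Q.map (Polynomial.C) + (Polynomial.X : Polynomial ℂ) • M.map Polynomial.C)).coeff i = 0) ∧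
    ∃ c : ℂ, c ≠ 0 ∧ ∀ M : Matrix (Fin d) (Fin d) ℂ, M.IsSymm →
      (Matrix.det (Q.map (Polynomial.C) + (Polynomial.X : Polynomial ℂ) • M.map Polynomial.C)).coeff k
        = c * Matrix.det (Matrix.of fun i j : Fin k => (b i : Fin d → ℂ) ⬝ᵥ M.mulVec (b j : Fin d → ℂ)) := by
  classical
  have hkd : k ≤ d := by
    have h1 := Submodule.finrank_le K
    simp only [hk] at h1
    simpa using h1
  obtain ⟨W, hW⟩ := Submodule.exists_isCompl K
  set m := d - k with hmdef
  have hkm : k + m = d := by omega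
  have hfW : Module.finrank ℂ W = m := by
    have h1 := Submodule.finrank_add_eq_of_isCompl hW
    rw [hk] at h1
    simp only [Module.finrank_fintype_fun_eq_card, Fintype.card_fin] at h1
    omega
  let bW : Module.Basis (Fin m) ℂ W := Module.finBasisOfFinrankEq ℂ W hfW
  let cb : Module.Basis (Fin k ⊕ Fin m) ℂ (Fin d → ℂ) :=
    (b.prod bW).map (Submodule.prodEquivOfIsCompl K W hW)
  have hcbl : ∀ i, cb (Sum.inl i) = (b i : Fin d → ℂ) := by
    intro i
    simp [cb, Module.Basis.prod_apply]
  let e : (Fin k ⊕ Fin m) ≃ Fin d := finSumFinEquiv.trans (finCongr hkm)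
  let P : Matrix (Fin d) (Fin k ⊕ Fin m) ℂ := Matrix.of fun x j => cb j x
  let S : Matrix (Fin k ⊕ Fin m) (Fin k ⊕ Fin m) ℂ := P.submatrix e id
  have hS : S = ((Pi.basisFun ℂ (Fin d)).reindex e.symm).toMatrix cb := by
    ext i j
    simp [S, P, Module.Basis.toMatrix_apply, Module.Basis.repr_reindex_apply, Pi.basisFun_repr]
  have hSdet : IsUnit S.det := by
    rw [hS]
    exact Matrix.isUnit_det_of_left_inverse (Module.Basis.toMatrix_mul_toMatrix_flip _ _)
  have hPAP : ∀ (A : Matrix (Fin d) (Fin d) ℂ) (i j : Fin k ⊕ Fin m),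
      (Pᵀ * A * P) i j = (cb i : Fin d → ℂ) ⬝ᵥ A.mulVec (cb j) := by
    intro A i j
    simp only [Matrix.mul_apply, Matrix.transpose_apply, Matrix.mulVec, dotProduct,
      Finset.sum_mul, Finset.mul_sum, P, Matrix.of_apply]
    rw [Finset.sum_comm]
    exact Finset.sum_congr rfl fun x _ => Finset.sum_congr rfl fun y _ => by ring
  have hmemK : ∀ v : Fin d → ℂ, v ∈ K → Q.mulVec v = 0 := by
    intro v hv
    rw [hK, LinearMap.mem_ker] at hv
    simpa using hv
  have hQsd : ∀ u v : Fin d → ℂ, u ⬝ᵥ Q.mulVec v = (Q.mulVec u) ⬝ᵥ v := by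
    intro u v
    rw [Matrix.dotProduct_mulVec]
    congr 1
    conv_lhs => rw [← hQ]
    rw [Matrix.vecMul_transpose]
  let Q2 : Matrix (Fin m) (Fin m) ℂ :=
    Matrix.of fun i j => (cb (Sum.inr i) : Fin d → ℂ) ⬝ᵥ Q.mulVec (cb (Sum.inr j))
  have hQP : Pᵀ * Q * P = Matrix.fromBlocks 0 0 0 Q2 := by
    ext i j
    rw [hPAP]
    rcases i with i | i <;> rcases j with j | j
    · rw [hcbl, hQsd, hmemK _ (b i).2]
      simp [Matrix.fromBlocks]
    · rw [hcbl, hQsd, hmemK _ (b i).2]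
      simp [Matrix.fromBlocks]
    · rw [hcbl, hmemK _ (b j).2]
      simp [Matrix.fromBlocks]
    · simp [Matrix.fromBlocks, Q2]
  -- det Q2 ≠ 0
  have hQ2 : Q2.det ≠ 0 := by
    intro h0
    obtain ⟨v, hv0, hv⟩ := (Matrix.exists_mulVec_eq_zero_iff).2 h0
    set x : Fin d → ℂ := P.mulVec (Sum.elim 0 v) with hxdef
    have hx0 : Pᵀ.mulVec (Q.mulVec x) = 0 := by
      rw [hxdef, Matrix.mulVec_mulVec, Matrix.mulVec_mulVec, hQP,
        Matrix.fromBlocks_mulVec]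
      simp [hv]
    have hQx : Q.mulVec x = 0 := by
      have hPt : Pᵀ.mulVec (Q.mulVec x) = Sᵀ.mulVec ((Q.mulVec x) ∘ e) := by
        have : Pᵀ = Sᵀ.submatrix id e.symm := by
          simp [S, Matrix.transpose_submatrix, Matrix.submatrix_submatrix]
        rw [this, Matrix.submatrix_mulVec_equiv]
        simp
      have hinj : Function.Injective (Sᵀ.mulVec) :=
        Matrix.mulVec_injective_iff_isUnit.mpr ((Matrix.isUnit_iff_isUnit_det _).mpr (by rwa [Matrix.det_transpose]))
      have h1 : Sᵀ.mulVec ((Q.mulVec x) ∘ e) = Sᵀ.mulVec 0 := by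
        rw [← hPt, hx0, Matrix.mulVec_zero]
      have h2 : (Q.mulVec x) ∘ e = 0 := hinj h1
      funext y
      have := congrFun h2 (e.symm y)
      simpa using this
    have hxK : x ∈ K := by
      rw [hK, LinearMap.mem_ker]
      simpa using hQx
    have hxsum : x = ∑ i, Sum.elim (0 : Fin k → ℂ) v i • cb i := by
      funext y
      rw [hxdef]
      simp only [Matrix.mulVec, dotProduct, P, Matrix.of_apply, Finset.sum_apply,
        Pi.smul_apply, smul_eq_mul]
      exact Finset.sum_congr rfl fun i _ => by ring
    have hrepr : ⇑(cb.repr x) = Sum.elim (0 : Fin k → ℂ) v := by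
      rw [hxsum]
      exact cb.repr_sum_self _
    have hvj : ∀ j, v j = 0 := by
      intro j
      have h1 : cb.repr x (Sum.inr j) = v j := by rw [hrepr]; simp
      rw [← h1]
      have hxco : x = ((⟨x, hxK⟩ : K) : Fin d → ℂ) := rfl
      have : cb.repr x = (b.prod bW).repr ((Submodule.prodEquivOfIsCompl K W hW).symm x) := by
        simp [cb, Module.Basis.map_repr]
      rw [this, hxco, Submodule.prodEquivOfIsCompl_symm_apply_left]
      simp
    exact hv0 (funext hvj)
  -- main key identity
  have key : ∀ Mt : Matrix (Fin d) (Fin d) ℂ,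
      C (S.det * S.det) * (Q.map C + (X : ℂ[X]) • Mt.map C).det
        = X ^ k * (Matrix.fromBlocks
            ((Pᵀ * Mt * P).toBlocks₁₁.map C)
            ((Pᵀ * Mt * P).toBlocks₁₂.map C)
            ((X : ℂ[X]) • (Pᵀ * Mt * P).toBlocks₂₁.map C)
            (Q2.map C + (X : ℂ[X]) • (Pᵀ * Mt * P).toBlocks₂₂.map C)).det := by
    intro Mt
    set Z : Matrix (Fin d) (Fin d) ℂ[X] := Q.map C + (X : ℂ[X]) • Mt.map C with hZ
    have lhs_eq : ((Sᵀ.map C) * (Z.submatrix e e) * (S.map C)).det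
        = C (S.det * S.det) * Z.det := by
      have hdm : ∀ (A : Matrix (Fin k ⊕ Fin m) (Fin k ⊕ Fin m) ℂ), (A.map ⇑C).det = C A.det := by
        intro A
        rw [RingHom.map_det]
        rfl
      rw [Matrix.det_mul, Matrix.det_mul, Matrix.transpose_map,
        Matrix.det_transpose, hdm, Matrix.det_submatrix_equiv_self]
      rw [_root_.map_mul]
      ring
    have prod_eq : (Sᵀ.map C) * (Z.submatrix e e) * (S.map C)
        = (Pᵀ * Q * P).map C + (X : ℂ[X]) • (Pᵀ * Mt * P).map C := by
      have h1 : Sᵀ.map C = (Pᵀ.map C).submatrix id ⇑e := by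
        simp [S, Matrix.transpose_submatrix, Matrix.submatrix_map]
      have h2 : S.map C = (P.map C).submatrix ⇑e id := by
        simp [S, Matrix.submatrix_map]
      rw [h1, h2, Matrix.submatrix_mul_equiv, Matrix.submatrix_mul_equiv,
        Matrix.submatrix_id_id, hZ]
      simp only [Matrix.mul_add, Matrix.add_mul, Matrix.mul_smul, Matrix.smul_mul,
        ← Matrix.map_mul]
    set NM := Pᵀ * Mt * P with hNM
    have rhs_eq : (Pᵀ * Q * P).map C + (X : ℂ[X]) • NM.map C
        = Matrix.fromBlocks ((X : ℂ[X]) • (1 : Matrix (Fin k) (Fin k) ℂ[X])) 0 0 1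
          * Matrix.fromBlocks (NM.toBlocks₁₁.map C) (NM.toBlocks₁₂.map C)
              ((X : ℂ[X]) • NM.toBlocks₂₁.map C) (Q2.map C + (X : ℂ[X]) • NM.toBlocks₂₂.map C) := by
      conv_lhs => rw [← Matrix.fromBlocks_toBlocks NM]
      rw [hQP, Matrix.fromBlocks_map, Matrix.fromBlocks_map, Matrix.fromBlocks_smul,
        Matrix.fromBlocks_add, Matrix.fromBlocks_multiply]
      congr 1 <;> simp [Matrix.smul_mul]
    rw [← lhs_eq, prod_eq, rhs_eq, Matrix.det_mul, Matrix.det_fromBlocks_zero₂₁,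
      Matrix.det_smul, Matrix.det_one, Fintype.card_fin, Matrix.det_one]
    simp
  -- extraction of coefficients
  have hSd0 : S.det ≠ 0 := hSdet.ne_zero
  have hS2 : S.det * S.det ≠ 0 := mul_ne_zero hSd0 hSd0
  have hblk : ∀ Mt : Matrix (Fin d) (Fin d) ℂ,
      (Pᵀ * Mt * P).toBlocks₁₁
        = Matrix.of fun i j : Fin k => (b i : Fin d → ℂ) ⬝ᵥ Mt.mulVec (b j : Fin d → ℂ) := by
    intro Mt
    ext i j
    show (Pᵀ * Mt * P) (Sum.inl i) (Sum.inl j) = _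
    rw [hPAP, hcbl, hcbl]
    rfl
  have hev : ∀ Mt : Matrix (Fin d) (Fin d) ℂ,
      (Matrix.fromBlocks
            ((Pᵀ * Mt * P).toBlocks₁₁.map C)
            ((Pᵀ * Mt * P).toBlocks₁₂.map C)
            ((X : ℂ[X]) • (Pᵀ * Mt * P).toBlocks₂₁.map C)
            (Q2.map C + (X : ℂ[X]) • (Pᵀ * Mt * P).toBlocks₂₂.map C)).det.coeff 0
        = (Pᵀ * Mt * P).toBlocks₁₁.det * Q2.det := by
    intro Mt
    rw [Polynomial.coeff_zero_eq_eval_zero]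
    have h1 : Polynomial.eval 0 ((Matrix.fromBlocks
            ((Pᵀ * Mt * P).toBlocks₁₁.map C)
            ((Pᵀ * Mt * P).toBlocks₁₂.map C)
            ((X : ℂ[X]) • (Pᵀ * Mt * P).toBlocks₂₁.map C)
            (Q2.map C + (X : ℂ[X]) • (Pᵀ * Mt * P).toBlocks₂₂.map C)).det)
        = ((Matrix.fromBlocks
            ((Pᵀ * Mt * P).toBlocks₁₁.map C)
            ((Pᵀ * Mt * P).toBlocks₁₂.map C)
            ((X : ℂ[X]) • (Pᵀ * Mt * P).toBlocks₂₁.map C)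
            (Q2.map C + (X : ℂ[X]) • (Pᵀ * Mt * P).toBlocks₂₂.map C)).map
              (⇑(Polynomial.evalRingHom (0 : ℂ)))).det :=
      RingHom.map_det (Polynomial.evalRingHom (0 : ℂ)) _
    rw [h1, Matrix.fromBlocks_map]
    have e11 : ((Pᵀ * Mt * P).toBlocks₁₁.map ⇑C).map ⇑(Polynomial.evalRingHom (0 : ℂ))
        = (Pᵀ * Mt * P).toBlocks₁₁ := by
      ext i j; simp
    have e21 : (((X : ℂ[X]) • (Pᵀ * Mt * P).toBlocks₂₁.map ⇑C)).map ⇑(Polynomial.evalRingHom (0 : ℂ))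
        = (0 : Matrix (Fin m) (Fin k) ℂ) := by
      ext i j; simp [Matrix.smul_apply]
    have e22 : ((Q2.map ⇑C + (X : ℂ[X]) • (Pᵀ * Mt * P).toBlocks₂₂.map ⇑C)).map
          ⇑(Polynomial.evalRingHom (0 : ℂ)) = Q2 := by
      ext i j; simp [Matrix.add_apply, Matrix.smul_apply]
    rw [e11, e21, e22, Matrix.det_fromBlocks_zero₂₁]
  constructor
  · intro M hM i hi
    have hkey := congrArg (fun p => p.coeff i) (key M)
    simp only [Polynomial.coeff_C_mul] at hkey
    rw [mul_comm ((X : ℂ[X]) ^ k), Polynomial.coeff_mul_X_pow', if_neg (by omega)] at hkey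
    exact (mul_eq_zero.1 hkey).resolve_left hS2
  · refine ⟨Q2.det / (S.det * S.det), div_ne_zero hQ2 hS2, ?_⟩
    intro M hM
    have hkey := congrArg (fun p => p.coeff k) (key M)
    simp only [Polynomial.coeff_C_mul] at hkey
    rw [mul_comm ((X : ℂ[X]) ^ k), Polynomial.coeff_mul_X_pow', if_pos le_rfl,
      Nat.sub_self, hev M, hblk M] at hkey
    field_simp
    linear_combination hkey
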